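/- If (f,q) solves the one-dimensional Ginzburg-Landau system (1/κ²)f'' = f(f²+q²−1), q'' = qf² on (−a,a) with boundary conditions f'(±a)=0, q'(±a)=h₀, and f is not identically zero, then |f(x)| ≤ 1 for all x in (−a,a). -/

import Mathlib

open Set Filter Topology

lemma aux_no_max (g : ℝ → ℝ) (b c x₀ : ℝ) (hbc : b < c) (hx₀ : x₀ ∈ Set.Icc b c)
    (hd : Differentiable ℝ g) (hd' : Differentiable ℝ (deriv g))
    (hmax : ∀ y ∈ Set.Icc b c, g y ≤ g x₀)
    (h1 : deriv g x₀ = 0) (h2 : 0 < deriv (deriv g) x₀) : False := by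
  have hda : HasDerivAt (deriv g) (deriv (deriv g) x₀) x₀ := (hd' x₀).hasDerivAt
  have hslope := hasDerivAt_iff_tendsto_slope.mp hda
  have hev : ∀ᶠ y in 𝓝[≠] x₀, 0 < slope (deriv g) x₀ y :=
    hslope.eventually (lt_mem_nhds h2)
  rw [eventually_nhdsWithin_iff] at hev
  rcases Metric.eventually_nhds_iff.mp hev with ⟨ε, hε, hball⟩
  have key : ∀ z : ℝ, z ≠ x₀ → |z - x₀| < ε → 0 < deriv g z / (z - x₀) := by
    intro z hz hzd
    have := hball (y := z) (by simpa [Real.dist_eq] using hzd) (by simpa using hz)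
    simpa [slope, h1, div_eq_inv_mul] using this
  rcases lt_or_eq_of_le hx₀.2 with hlt | heq
  · -- x₀ < c, move right
    set y := min c (x₀ + ε / 2) with hy
    have hxy : x₀ < y := lt_min hlt (by linarith)
    have hyc : y ≤ c := min_le_left _ _
    have hpos : ∀ z ∈ Set.Ioo x₀ y, 0 < deriv g z := by
      intro z hz
      have hz1 : z ≠ x₀ := ne_of_gt hz.1
      have hz2 : |z - x₀| < ε := by
        rw [abs_of_pos (by linarith [hz.1])]
        have : z < x₀ + ε / 2 := lt_of_lt_of_le hz.2 (min_le_right _ _)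
        linarith
      have := key z hz1 hz2
      have hzx : 0 < z - x₀ := by linarith [hz.1]
      by_contra hle
      push_neg at hle
      nlinarith [div_nonpos_of_nonpos_of_nonneg hle (le_of_lt hzx)]
    have hmono : StrictMonoOn g (Set.Icc x₀ y) :=
      strictMonoOn_of_deriv_pos (convex_Icc _ _) hd.continuous.continuousOn
        (by intro z hz; rw [interior_Icc] at hz; exact hpos z hz)
    have : g x₀ < g y := hmono (Set.left_mem_Icc.mpr hxy.le) (Set.right_mem_Icc.mpr hxy.le) hxy
    have : g y ≤ g x₀ := hmax y ⟨le_trans hx₀.1 hxy.le, hyc⟩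
    linarith
  · -- x₀ = c, so b < x₀, move left
    have hbx : b < x₀ := heq ▸ hbc
    set y := max b (x₀ - ε / 2) with hy
    have hxy : y < x₀ := max_lt hbx (by linarith)
    have hyb : b ≤ y := le_max_left _ _
    have hneg : ∀ z ∈ Set.Ioo y x₀, deriv g z < 0 := by
      intro z hz
      have hz1 : z ≠ x₀ := ne_of_lt hz.2
      have hz2 : |z - x₀| < ε := by
        rw [abs_of_neg (by linarith [hz.2])]
        have : x₀ - ε / 2 < z := lt_of_le_of_lt (le_max_right _ _) hz.1
        linarith
      have := key z hz1 hz2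
      have hzx : z - x₀ < 0 := by linarith [hz.2]
      by_contra hle
      push_neg at hle
      nlinarith [div_nonpos_of_nonneg_of_nonpos hle (le_of_lt hzx)]
    have hanti : StrictAntiOn g (Set.Icc y x₀) :=
      strictAntiOn_of_deriv_neg (convex_Icc _ _) hd.continuous.continuousOn
        (by intro z hz; rw [interior_Icc] at hz; exact hneg z hz)
    have : g x₀ < g y := hanti (Set.left_mem_Icc.mpr hxy.le) (Set.right_mem_Icc.mpr hxy.le) hxy
    have : g y ≤ g x₀ := hmax y ⟨hyb, le_trans hxy.le hx₀.2⟩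
    linarith

theorem stmt_0 (a κ h₀ : ℝ) (ha : 0 < a) (hκ : 0 < κ) (hh₀ : 0 ≤ h₀)
    (f q : ℝ → ℝ) (hf2 : ContDiff ℝ 2 f) (hq2 : ContDiff ℝ 2 q)
    (hfeq : ∀ x ∈ Set.Ioo (-a) a,
      (1 / κ ^ 2) * deriv (deriv f) x = f x * ((f x) ^ 2 + (q x) ^ 2 - 1))
    (hqeq : ∀ x ∈ Set.Ioo (-a) a, deriv (deriv q) x = q x * (f x) ^ 2)
    (hbf1 : deriv f (-a) = 0) (hbf2 : deriv f a = 0)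
    (hbq1 : deriv q (-a) = h₀) (hbq2 : deriv q a = h₀)
    (hnz : ∃ x ∈ Set.Icc (-a) a, f x ≠ 0) :
    ∀ x ∈ Set.Ioo (-a) a, |f x| ≤ 1 := by
  have hfd : Differentiable ℝ f := hf2.differentiable (by norm_num)
  have hf1 : ContDiff ℝ 1 (deriv f) := by
    have h := (contDiff_succ_iff_deriv (n := 1)).mp (by exact_mod_cast hf2)
    exact h.2.2
  have hfd' : Differentiable ℝ (deriv f) := hf1.differentiable (by norm_num)
  have hcont2 : Continuous (deriv (deriv f)) :=
    (contDiff_one_iff_deriv.mp hf1).2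
  -- extend the ODE to the closed interval
  have hκ2 : (0:ℝ) < κ ^ 2 := by positivity
  have hfeqIcc : ∀ x ∈ Set.Icc (-a) a,
      deriv (deriv f) x = κ ^ 2 * (f x * ((f x) ^ 2 + (q x) ^ 2 - 1)) := by
    have heq : Set.EqOn (fun x => deriv (deriv f) x)
        (fun x => κ ^ 2 * (f x * ((f x) ^ 2 + (q x) ^ 2 - 1))) (Set.Ioo (-a) a) := by
      intro x hx
      have := hfeq x hx
      field_simp at this ⊢
      linarith
    have hcl : Set.EqOn (fun x => deriv (deriv f) x)
        (fun x => κ ^ 2 * (f x * ((f x) ^ 2 + (q x) ^ 2 - 1)))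
        (closure (Set.Ioo (-a) a)) := by
      apply heq.closure hcont2
      exact continuous_const.mul ((hfd.continuous.mul
        (((hfd.continuous.pow 2).add ((hq2.continuous.pow 2))).sub continuous_const)))
    intro x hx
    have : closure (Set.Ioo (-a) a) = Set.Icc (-a) a := closure_Ioo (by linarith)
    exact hcl (this ▸ hx)
  -- g = f^2
  set g : ℝ → ℝ := fun x => (f x) ^ 2 with hg
  have hgd : Differentiable ℝ g := fun x => (hfd x).pow 2
  have hgderiv : deriv g = fun x => 2 * f x * deriv f x := by
    funext x
    have h : HasDerivAt g (2 * f x * deriv f x) x := by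
      have := ((hfd x).hasDerivAt).fun_pow 2
      simpa [mul_comm] using this
    exact h.deriv
  have hgd' : Differentiable ℝ (deriv g) := by
    rw [hgderiv]
    exact (differentiable_const _ |>.mul hfd).mul hfd'
  have hgdd : ∀ x, deriv (deriv g) x =
      2 * deriv f x * deriv f x + 2 * f x * deriv (deriv f) x := by
    intro x
    rw [hgderiv]
    have h : HasDerivAt (fun x => 2 * f x * deriv f x)
        (2 * deriv f x * deriv f x + 2 * f x * deriv (deriv f) x) x := by
      have h1 : HasDerivAt (fun x => 2 * f x) (2 * deriv f x) x :=
        ((hfd x).hasDerivAt).const_mul 2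
      have h2 : HasDerivAt (deriv f) (deriv (deriv f) x) x := (hfd' x).hasDerivAt
      exact h1.mul h2
    exact h.deriv
  -- max point
  obtain ⟨x₀, hx₀mem, hx₀max⟩ := (isCompact_Icc (a := -a) (b := a)).exists_isMaxOn
    (Set.nonempty_Icc.mpr (by linarith)) ((hfd.continuous.pow 2).continuousOn)
  intro x hx
  by_contra habs
  push_neg at habs
  have hx₀gt : 1 < g x₀ := by
    have h1 : g x ≤ g x₀ := hx₀max (Set.mem_Icc_of_Ioo hx)
    have : 1 < (f x) ^ 2 := by
      have := sq_abs (f x)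
      nlinarith [abs_nonneg (f x)]
    simpa [hg] using lt_of_lt_of_le this h1
  have hfx₀ : (f x₀)^2 = g x₀ := rfl
  -- deriv g x₀ = 0
  have hderiv0 : deriv g x₀ = 0 := by
    rcases eq_or_lt_of_le hx₀mem.1 with h1 | h1
    · rw [hgderiv]; simp [← h1, hbf1]
    rcases eq_or_lt_of_le hx₀mem.2 with h2 | h2
    · rw [hgderiv]; simp [h2, hbf2]
    · have hloc : IsLocalMax g x₀ :=
        hx₀max.isLocalMax (Icc_mem_nhds h1 h2)
      exact hloc.deriv_eq_zero
  -- second derivative positive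
  have hdd : 0 < deriv (deriv g) x₀ := by
    rw [hgdd, hfeqIcc x₀ hx₀mem]
    have h3 : 0 < (f x₀) ^ 2 := by nlinarith
    have h4 : 0 < (f x₀) ^ 2 + (q x₀) ^ 2 - 1 := by nlinarith [sq_nonneg (q x₀)]
    nlinarith [mul_pos hκ2 (mul_pos h3 h4), sq_nonneg (deriv f x₀)]
  exact aux_no_max g (-a) a x₀ (by linarith) hx₀mem hgd hgd'
    (fun y hy => hx₀max hy) hderiv0 hdd
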